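/- Let A ∈ Mₙ(ℤ) and let {F_m} be a Følner sequence in ℕ. If μ is a Borel probability measure on 𝕋ⁿ such that lim_{m→∞} (1/|F_m|) Σ_{j ∈ F_m} μ̂(A^j k + l) = μ̂(k) μ̂(l) for all k, l ∈ ℤ^{n×1}, then μ̂(Ak) = μ̂(k) for every k ∈ ℤ^{n×1}, and hence μ is T_A-invariant. -/

import Mathlib

open MeasureTheory Filter Matrix Topology
open scoped symmDiff

instance : Fact ((0:ℝ) < 1) := ⟨one_pos⟩

/-- The `n`-torus `𝕋ⁿ = ℝⁿ/ℤⁿ`, as the product of `n` copies of `ℝ/ℤ`. -/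
abbrev Torus (n : ℕ) := Fin n → AddCircle (1 : ℝ)

/-- The `×A` map `T_A` on the `n`-torus, `T_A(x + ℤⁿ) = xA + ℤⁿ` for row vectors `x`. -/
noncomputable def TA {n : ℕ} (A : Matrix (Fin n) (Fin n) ℤ) (x : Torus n) : Torus n :=
  fun j => ∑ i, A i j • x i

/-- The Fourier coefficient `μ̂(k) = ∫_{𝕋ⁿ} z^k dμ(z)` of a measure `μ` on the `n`-torus,
where `z^k = z₁^{k₁} ⋯ zₙ^{kₙ}`. -/
noncomputable def fc {n : ℕ} (μ : Measure (Torus n)) (k : Fin n → ℤ) : ℂ :=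
  ∫ x, ∏ i, fourier (k i) (x i) ∂μ

/-- A Følner sequence in `ℕ`: a sequence of nonempty finite subsets `F m ⊆ ℕ` with
`|(F m + m') ∆ F m| / |F m| → 0` for every `m' ∈ ℕ`. -/
def IsFolner (F : ℕ → Finset ℕ) : Prop :=
  (∀ m, (F m).Nonempty) ∧
  ∀ m' : ℕ, Tendsto
    (fun m => ((((F m).image (· + m')) ∆ (F m)).card : ℝ) / (F m).card) atTop (𝓝 0)

namespace InvAux

variable {n : ℕ}

/-- The character `z ↦ z^k` on the torus, as a continuous map. -/
noncomputable def ef (k : Fin n → ℤ) : C(Torus n, ℂ) :=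
  ⟨fun x => ∏ i, fourier (k i) (x i),
   continuous_finset_prod _ fun i _ => ((fourier (k i)).continuous).comp (continuous_apply i)⟩

lemma ef_apply (k : Fin n → ℤ) (x : Torus n) : ef k x = ∏ i, fourier (k i) (x i) := rfl

lemma fc_eq (μ : Measure (Torus n)) (k : Fin n → ℤ) : fc μ k = ∫ x, ef k x ∂μ := rfl

lemma ef_zero : ef (0 : Fin n → ℤ) = 1 := by
  ext x; simp [ef_apply, fourier_zero]

lemma ef_mul (k l : Fin n → ℤ) : ef k * ef l = ef (k + l) := by
  ext x
  simp only [ContinuousMap.mul_apply, ef_apply, Pi.add_apply, fourier_add]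
  rw [Finset.prod_mul_distrib]

lemma star_ef (k : Fin n → ℤ) : star (ef k) = ef (-k) := by
  ext x
  simp only [ContinuousMap.star_apply, ef_apply, Pi.neg_apply, fourier_neg]
  rw [RCLike.star_def, map_prod]

lemma norm_ef_apply (k : Fin n → ℤ) (x : Torus n) : ‖ef k x‖ = 1 := by
  rw [ef_apply, norm_prod]
  simp [Circle.norm_coe, fourier_apply]

lemma continuous_TA (A : Matrix (Fin n) (Fin n) ℤ) : Continuous (TA A) :=
  continuous_pi fun j =>
    continuous_finset_sum _ fun i _ => (continuous_zsmul (A i j)).comp (continuous_apply i)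

lemma integrable_cont (μ : Measure (Torus n)) [IsFiniteMeasure μ] (f : C(Torus n, ℂ)) :
    Integrable f μ :=
  f.continuous.integrable_of_hasCompactSupport (HasCompactSupport.of_compactSpace f)

lemma norm_fc_le (μ : Measure (Torus n)) [IsProbabilityMeasure μ] (k : Fin n → ℤ) :
    ‖fc μ k‖ ≤ 1 := by
  rw [fc_eq]
  have := norm_integral_le_of_norm_le_const (μ := μ) (f := fun x => ef k x) (C := 1)
    (Eventually.of_forall fun x => (norm_ef_apply k x).le)
  simpa using this

lemma fc_zero (μ : Measure (Torus n)) [IsProbabilityMeasure μ] : fc μ (0 : Fin n → ℤ) = 1 := by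
  rw [fc_eq, ef_zero]
  simp

lemma prod_fourier_TA (A : Matrix (Fin n) (Fin n) ℤ) (k : Fin n → ℤ) (x : Torus n) :
    ∏ j, fourier (k j) (TA A x j) = ∏ i, fourier ((A.mulVec k) i) (x i) := by
  choose r hr using fun i => QuotientAddGroup.mk_surjective (x i)
  have hTA : ∀ j, TA A x j = ((∑ i, (A i j : ℝ) * r i : ℝ) : AddCircle (1:ℝ)) := by
    intro j
    show ∑ i, A i j • x i = _
    calc ∑ i, A i j • x i = ∑ i, (((A i j : ℝ) * r i : ℝ) : AddCircle (1:ℝ)) :=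
          Finset.sum_congr rfl fun i _ => by
            rw [← hr i, ← QuotientAddGroup.mk_zsmul, zsmul_eq_mul]
      _ = _ := (map_sum (QuotientAddGroup.mk' (AddSubgroup.zmultiples (1:ℝ))) _ Finset.univ).symm
  have hx : ∀ i, x i = ((r i : ℝ) : AddCircle (1:ℝ)) := fun i => (hr i).symm
  calc ∏ j, fourier (k j) (TA A x j)
      = ∏ j, Complex.exp (2 * Real.pi * Complex.I * (k j) * (∑ i, (A i j : ℝ) * r i) / 1) := by
        refine Finset.prod_congr rfl fun j _ => ?_
        rw [hTA j, fourier_coe_apply]; norm_num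
    _ = Complex.exp (∑ j, 2 * Real.pi * Complex.I * (k j) * (∑ i, (A i j : ℝ) * r i) / 1) :=
        (Complex.exp_sum _ _).symm
    _ = Complex.exp (∑ i, 2 * Real.pi * Complex.I * ((A.mulVec k) i) * (r i) / 1) := by
        congr 1
        simp only [div_one, Matrix.mulVec, dotProduct]
        push_cast
        simp only [Finset.mul_sum, Finset.sum_mul]
        rw [Finset.sum_comm]
        refine Finset.sum_congr rfl fun i _ => Finset.sum_congr rfl fun j _ => by ring
    _ = ∏ i, Complex.exp (2 * Real.pi * Complex.I * ((A.mulVec k) i) * (r i) / 1) :=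
        Complex.exp_sum _ _
    _ = ∏ i, fourier ((A.mulVec k) i) (x i) := by
        refine Finset.prod_congr rfl fun i _ => ?_
        rw [hx i, fourier_coe_apply]; norm_num

lemma fc_map (A : Matrix (Fin n) (Fin n) ℤ) (μ : Measure (Torus n)) (k : Fin n → ℤ) :
    fc (Measure.map (TA A) μ) k = fc μ (A.mulVec k) := by
  rw [fc, fc]
  rw [integral_map (continuous_TA A).measurable.aemeasurable
    (Continuous.aestronglyMeasurable (by exact (ef k).continuous))]
  exact integral_congr_ae (Eventually.of_forall fun x => prod_fourier_TA A k x)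

/-- The star subalgebra generated by the characters. -/
noncomputable def efAlg (n : ℕ) : StarSubalgebra ℂ C(Torus n, ℂ) where
  toSubalgebra := Algebra.adjoin ℂ (Set.range (ef (n := n)))
  star_mem' := by
    show Algebra.adjoin ℂ (Set.range (ef (n := n))) ≤
      star (Algebra.adjoin ℂ (Set.range (ef (n := n))))
    refine Algebra.adjoin_le ?_
    rintro - ⟨k, rfl⟩
    show star (ef k) ∈ Algebra.adjoin ℂ (Set.range (ef (n := n)))
    rw [star_ef]
    exact Algebra.subset_adjoin ⟨-k, rfl⟩

lemma efAlg_coe (n : ℕ) :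
    Subalgebra.toSubmodule (efAlg n).toSubalgebra = Submodule.span ℂ (Set.range (ef (n := n))) := by
  apply Algebra.adjoin_eq_span_of_subset
  refine Set.Subset.trans ?_ Submodule.subset_span
  intro x hx
  refine Submonoid.closure_induction (fun _ => id) ⟨0, ef_zero⟩ ?_ hx
  rintro - - - - ⟨k, rfl⟩ ⟨l, rfl⟩
  exact ⟨k + l, (ef_mul k l).symm⟩

lemma efAlg_sep (n : ℕ) : (efAlg n).SeparatesPoints := by
  intro x y hxy
  have hex : ∃ i, x i ≠ y i := by
    by_contra hc
    push_neg at hc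
    exact hxy (funext hc)
  obtain ⟨i, hi⟩ := hex
  have hef : ∀ z : Torus n, ef (Pi.single i 1) z = AddCircle.toCircle (z i) := by
    intro z
    rw [ef_apply, Finset.prod_eq_single i
      (fun j _ hj => by rw [Pi.single_eq_of_ne hj]; exact fourier_zero)
      (fun hmem => absurd (Finset.mem_univ i) hmem), Pi.single_eq_same, fourier_one]
  refine ⟨_, ⟨ef (Pi.single i 1), Algebra.subset_adjoin ⟨Pi.single i 1, rfl⟩, rfl⟩, ?_⟩
  dsimp only
  rw [hef x, hef y]
  contrapose! hi
  rw [Circle.coe_inj] at hi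
  exact AddCircle.injective_toCircle one_ne_zero hi

lemma ext_fc {μ ν : Measure (Torus n)} [IsProbabilityMeasure μ] [IsProbabilityMeasure ν]
    (hfc : ∀ k, fc μ k = fc ν k) : μ = ν := by
  have contInt : ∀ ρ : Measure (Torus n), IsProbabilityMeasure ρ →
      Continuous (fun f : C(Torus n, ℂ) => ∫ x, f x ∂ρ) := by
    intro ρ hρ
    refine (LipschitzWith.of_dist_le_mul (K := 1) fun f g => ?_).continuous
    rw [NNReal.coe_one, one_mul, dist_eq_norm, ← integral_sub (integrable_cont ρ f)
      (integrable_cont ρ g)]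
    have hb : ∀ x, ‖f x - g x‖ ≤ dist f g := fun x => by
      rw [← dist_eq_norm]; exact ContinuousMap.dist_apply_le_dist x
    have := norm_integral_le_of_norm_le_const (μ := ρ) (f := fun x => f x - g x)
      (C := dist f g) (Eventually.of_forall hb)
    simpa using this
  have key : ∀ f : C(Torus n, ℂ), ∫ x, f x ∂μ = ∫ x, f x ∂ν := by
    have hspan : ∀ f ∈ Submodule.span ℂ (Set.range (ef (n := n))),
        ∫ x, (f : C(Torus n, ℂ)) x ∂μ = ∫ x, f x ∂ν := by
      intro f hf
      induction hf using Submodule.span_induction with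
      | mem f hf => obtain ⟨k, rfl⟩ := hf; exact hfc k
      | zero => simp
      | add f g _ _ hf hg =>
          simp only [ContinuousMap.coe_add, Pi.add_apply]
          rw [integral_add (integrable_cont μ f) (integrable_cont μ g),
            integral_add (integrable_cont ν f) (integrable_cont ν g), hf, hg]
      | smul c f _ hf =>
          simp only [ContinuousMap.coe_smul, Pi.smul_apply]
          rw [integral_smul, integral_smul, hf]
    have hS : ∀ f ∈ efAlg n, ∫ x, (f : C(Torus n, ℂ)) x ∂μ = ∫ x, f x ∂ν := by
      intro f hf
      refine hspan f ?_
      have : f ∈ Subalgebra.toSubmodule (efAlg n).toSubalgebra := hf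
      rwa [efAlg_coe] at this
    have htop : (efAlg n).topologicalClosure = ⊤ :=
      ContinuousMap.starSubalgebra_topologicalClosure_eq_top_of_separatesPoints _ (efAlg_sep n)
    intro f
    have hf : f ∈ closure ((efAlg n : Set C(Torus n, ℂ))) := by
      have : f ∈ (efAlg n).topologicalClosure := by rw [htop]; trivial
      exact this
    have hclosed : IsClosed {f : C(Torus n, ℂ) | ∫ x, f x ∂μ = ∫ x, f x ∂ν} :=
      isClosed_eq (contInt μ inferInstance) (contInt ν inferInstance)
    exact closure_minimal hS hclosed hf
  -- conclude via lintegrals of bounded continuous ℝ≥0-valued functions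
  refine ext_of_forall_lintegral_eq_of_IsFiniteMeasure fun f => ?_
  have hcont : Continuous fun x : Torus n => (f x : ℝ) :=
    NNReal.continuous_coe.comp f.continuous
  have hint : ∀ ρ : Measure (Torus n), IsProbabilityMeasure ρ →
      Integrable (fun x => (f x : ℝ)) ρ := fun ρ _ =>
    hcont.integrable_of_hasCompactSupport (HasCompactSupport.of_compactSpace _)
  have hreal : ∫ x, (f x : ℝ) ∂μ = ∫ x, (f x : ℝ) ∂ν := by
    have h2 := key ⟨fun x => ((f x : ℝ) : ℂ), Complex.continuous_ofReal.comp hcont⟩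
    simp only [ContinuousMap.coe_mk] at h2
    have e1 : ∫ x, ((f x : ℝ) : ℂ) ∂μ = ((∫ x, (f x : ℝ) ∂μ : ℝ) : ℂ) := by
      simpa using ContinuousLinearMap.integral_comp_comm Complex.ofRealCLM
        (hint μ inferInstance)
    have e2 : ∫ x, ((f x : ℝ) : ℂ) ∂ν = ((∫ x, (f x : ℝ) ∂ν : ℝ) : ℂ) := by
      simpa using ContinuousLinearMap.integral_comp_comm Complex.ofRealCLM
        (hint ν inferInstance)
    rw [e1, e2] at h2
    exact Complex.ofReal_inj.mp h2
  rw [lintegral_coe_eq_integral _ (hint μ inferInstance),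
    lintegral_coe_eq_integral _ (hint ν inferInstance), hreal]

end InvAux

open InvAux

theorem invariance_from_fourier_limit
    {n : ℕ} (A : Matrix (Fin n) (Fin n) ℤ)
    (F : ℕ → Finset ℕ) (hF : IsFolner F)
    (μ : Measure (Torus n)) [IsProbabilityMeasure μ]
    (h : ∀ k l : Fin n → ℤ,
      Tendsto
        (fun m => (1 / ((F m).card : ℂ)) * ∑ j ∈ F m, fc μ ((A ^ j).mulVec k + l))
        atTop (𝓝 (fc μ k * fc μ l))) :
    (∀ k : Fin n → ℤ, fc μ (A.mulVec k) = fc μ k) ∧ Measure.map (TA A) μ = μ := by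
  have hfcA : ∀ k : Fin n → ℤ, fc μ (A.mulVec k) = fc μ k := by
    intro k
    set g : ℕ → ℂ := fun j => fc μ ((A ^ j).mulVec k + 0) with hg
    have h1 : Tendsto (fun m => (1 / ((F m).card : ℂ)) * ∑ j ∈ F m, g j)
        atTop (𝓝 (fc μ k * fc μ 0)) := h k 0
    have h2 : Tendsto (fun m => (1 / ((F m).card : ℂ)) * ∑ j ∈ F m, g (j + 1))
        atTop (𝓝 (fc μ (A.mulVec k) * fc μ 0)) := by
      have hrw : ∀ j, (A ^ j).mulVec (A.mulVec k) = (A ^ (j + 1)).mulVec k := fun j => by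
        rw [Matrix.mulVec_mulVec, ← pow_succ]
      have := h (A.mulVec k) 0
      simpa only [hrw] using this
    -- the difference tends to zero, via the Følner property
    have hdiff : Tendsto (fun m => ((1 / ((F m).card : ℂ)) * ∑ j ∈ F m, g (j + 1)) -
        ((1 / ((F m).card : ℂ)) * ∑ j ∈ F m, g j)) atTop (𝓝 0) := by
      refine squeeze_zero_norm (fun m => ?_) (hF.2 1)
      set S := (F m).image (· + 1) with hS
      set T := F m with hT
      have hsum : ∑ j ∈ T, g (j + 1) = ∑ j ∈ S, g j := by
        rw [hS, Finset.sum_image (fun a _ b _ hab => by omega)]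
      have hgb : ∀ j, ‖g j‖ ≤ 1 := fun j => norm_fc_le μ _
      have hST : ∑ j ∈ S, g j - ∑ j ∈ T, g j = ∑ j ∈ S \ T, g j - ∑ j ∈ T \ S, g j := by
        rw [← Finset.sum_inter_add_sum_sdiff S T g, ← Finset.sum_inter_add_sum_sdiff T S g,
          Finset.inter_comm]
        ring
      have hnorm : ‖∑ j ∈ S, g j - ∑ j ∈ T, g j‖ ≤ ((S ∆ T).card : ℝ) := by
        rw [hST]
        have h1' : ‖∑ j ∈ S \ T, g j‖ ≤ ((S \ T).card : ℝ) := by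
          calc ‖∑ j ∈ S \ T, g j‖ ≤ ∑ j ∈ S \ T, ‖g j‖ := norm_sum_le _ _
            _ ≤ ∑ _j ∈ S \ T, (1 : ℝ) := Finset.sum_le_sum fun j _ => hgb j
            _ = ((S \ T).card : ℝ) := by simp
        have h2' : ‖∑ j ∈ T \ S, g j‖ ≤ ((T \ S).card : ℝ) := by
          calc ‖∑ j ∈ T \ S, g j‖ ≤ ∑ j ∈ T \ S, ‖g j‖ := norm_sum_le _ _
            _ ≤ ∑ _j ∈ T \ S, (1 : ℝ) := Finset.sum_le_sum fun j _ => hgb j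
            _ = ((T \ S).card : ℝ) := by simp
        have hcard : (S ∆ T).card = (S \ T).card + (T \ S).card := by
          rw [symmDiff_def, Finset.sup_eq_union,
            Finset.card_union_of_disjoint (disjoint_sdiff_sdiff)]
        calc ‖∑ j ∈ S \ T, g j - ∑ j ∈ T \ S, g j‖
            ≤ ‖∑ j ∈ S \ T, g j‖ + ‖∑ j ∈ T \ S, g j‖ := norm_sub_le _ _
          _ ≤ ((S \ T).card : ℝ) + ((T \ S).card : ℝ) := add_le_add h1' h2'
          _ = ((S ∆ T).card : ℝ) := by rw [hcard]; push_cast; ring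
      have hc : ‖(1 : ℂ) / ((F m).card : ℂ)‖ = 1 / ((F m).card : ℝ) := by
        rw [norm_div, norm_one, Complex.norm_natCast]
      rw [hsum, ← mul_sub, norm_mul, hc]
      calc 1 / ((F m).card : ℝ) * ‖∑ j ∈ S, g j - ∑ j ∈ T, g j‖
          ≤ 1 / ((F m).card : ℝ) * ((S ∆ T).card : ℝ) := by
            refine mul_le_mul_of_nonneg_left hnorm (by positivity)
        _ = ((S ∆ T).card : ℝ) / ((F m).card : ℝ) := by ring
    have h2' : Tendsto (fun m => ((1 / ((F m).card : ℂ)) * ∑ j ∈ F m, g j) +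
        (((1 / ((F m).card : ℂ)) * ∑ j ∈ F m, g (j + 1)) -
         ((1 / ((F m).card : ℂ)) * ∑ j ∈ F m, g j)))
        atTop (𝓝 (fc μ k * fc μ 0 + 0)) := h1.add hdiff
    simp only [add_sub_cancel, add_zero] at h2'
    have heq := tendsto_nhds_unique h2 h2'
    rwa [fc_zero, mul_one, mul_one] at heq
  refine ⟨hfcA, ?_⟩
  have hmap : IsProbabilityMeasure (Measure.map (TA A) μ) :=
    Measure.isProbabilityMeasure_map (continuous_TA A).measurable.aemeasurable
  exact ext_fc fun k => by rw [fc_map, hfcA]
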